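/- Jarvis march step correctness: let S be a finite set of points, and let p, q be consecutive vertices of the convex hull of S in clockwise order. Then the point r ∈ S \ {q} that maximizes the clockwise angle between (p, q) and (q, r) is the next vertex of the convex hull after q in clockwise order. -/

import Mathlib

open scoped Classical

noncomputable section

/-- Cross product `(a − o) × (b − o)` in the Euclidean plane. -/
def cross2 (o a b : EuclideanSpace ℝ (Fin 2)) : ℝ :=
  (a 0 - o 0) * (b 1 - o 1) - (a 1 - o 1) * (b 0 - o 0)

/-- `v` is a vertex of the convex hull of `S`. -/
def IsHullVertex (S : Finset (EuclideanSpace ℝ (Fin 2)))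
    (v : EuclideanSpace ℝ (Fin 2)) : Prop :=
  v ∈ S ∧ v ∉ convexHull ℝ ((S : Set (EuclideanSpace ℝ (Fin 2))) \ {v})

/-- `r` immediately follows `q` in the clockwise traversal of the hull of `S`:
both are hull vertices and all other points of `S` lie strictly to one side of the
directed line `q → r` (the side corresponding to the clockwise traversal, i.e.
`cross2 q r s > 0` in the paper's convention). -/
def CWNext (S : Finset (EuclideanSpace ℝ (Fin 2)))
    (q r : EuclideanSpace ℝ (Fin 2)) : Prop :=
  IsHullVertex S q ∧ IsHullVertex S r ∧
    ∀ s ∈ S, s ≠ q → s ≠ r → 0 < cross2 q r s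

namespace JarvisAux

/-- Cross product of plane vectors. -/
def crossv (a b : EuclideanSpace ℝ (Fin 2)) : ℝ := a 0 * b 1 - a 1 * b 0

theorem core_ineq (cu su cv sv X Y : ℝ) (hsu : 0 < su) (hsv : 0 < sv) (hX : 0 < X) (hY : 0 < Y)
    (hX2 : X ^ 2 = cu ^ 2 + su ^ 2) (hY2 : Y ^ 2 = cv ^ 2 + sv ^ 2)
    (h : cv * su < cu * sv) : cv * X < cu * Y := by
  rcases le_or_gt cu 0 with hcu | hcu
  · rcases le_or_gt cv 0 with hcv | hcv
    · rcases eq_or_lt_of_le hcu with h0 | hcu'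
      · have hcv' : cv < 0 := by nlinarith
        nlinarith
      · have hcv' : cv < 0 := by nlinarith
        have h1 : ((-cu) * Y) ^ 2 < ((-cv) * X) ^ 2 := by
          nlinarith [mul_pos (neg_pos.2 hcu') hsv]
        have h2 : (-cu) * Y < (-cv) * X :=
          lt_of_pow_lt_pow_left₀ 2 (le_of_lt (mul_pos (neg_pos.2 hcv') hX)) h1
        linarith
    · nlinarith
  · rcases le_or_gt cv 0 with hcv | hcv
    · nlinarith
    · have h1 : (cv * X) ^ 2 < (cu * Y) ^ 2 := by
        nlinarith [mul_pos hcv hsu]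
      exact lt_of_pow_lt_pow_left₀ 2 (le_of_lt (mul_pos hcu hY)) h1

theorem inner_eq (a u : EuclideanSpace ℝ (Fin 2)) :
    (inner ℝ a u : ℝ) = a 0 * u 0 + a 1 * u 1 := by
  simp [PiLp.inner_apply, RCLike.inner_apply, Fin.sum_univ_two]; ring

theorem norm_sq_eq (a : EuclideanSpace ℝ (Fin 2)) : ‖a‖ ^ 2 = a 0 ^ 2 + a 1 ^ 2 := by
  rw [← real_inner_self_eq_norm_sq, inner_eq]; ring

/-- Key monotonicity: if `u` and `v` lie strictly on the negative side of `a`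
(i.e. `a × u < 0` and `a × v < 0`) and `v × u > 0`, then the angle from `a` to `u`
is strictly smaller than that from `a` to `v`. -/
theorem angle_lt_of_crossv (a u v : EuclideanSpace ℝ (Fin 2))
    (hau : crossv a u < 0) (hav : crossv a v < 0) (hvu : 0 < crossv v u) :
    InnerProductGeometry.angle a u < InnerProductGeometry.angle a v := by
  have ha : a ≠ 0 := by rintro rfl; simp [crossv] at hau
  have hu : u ≠ 0 := by rintro rfl; simp [crossv] at hau
  have hv : v ≠ 0 := by rintro rfl; simp [crossv] at hav
  have hna : 0 < ‖a‖ := norm_pos_iff.2 ha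
  have hnu : 0 < ‖u‖ := norm_pos_iff.2 hu
  have hnv : 0 < ‖v‖ := norm_pos_iff.2 hv
  set cu : ℝ := inner ℝ a u with hcu
  set cv : ℝ := inner ℝ a v with hcv
  have hX2 : (‖a‖ * ‖u‖) ^ 2 = cu ^ 2 + (-(crossv a u)) ^ 2 := by
    rw [mul_pow, norm_sq_eq, norm_sq_eq, hcu, inner_eq]; simp [crossv]; ring
  have hY2 : (‖a‖ * ‖v‖) ^ 2 = cv ^ 2 + (-(crossv a v)) ^ 2 := by
    rw [mul_pow, norm_sq_eq, norm_sq_eq, hcv, inner_eq]; simp [crossv]; ring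
  have hid : ‖a‖ ^ 2 * crossv v u = cu * (-(crossv a v)) - cv * (-(crossv a u)) := by
    rw [norm_sq_eq, hcu, hcv, inner_eq, inner_eq]; simp [crossv]; ring
  have hkey : cv * (-(crossv a u)) < cu * (-(crossv a v)) := by
    nlinarith [mul_pos (pow_pos hna 2) hvu]
  have hmain : cv * (‖a‖ * ‖u‖) < cu * (‖a‖ * ‖v‖) :=
    core_ineq cu (-(crossv a u)) cv (-(crossv a v)) (‖a‖ * ‖u‖) (‖a‖ * ‖v‖)
      (by linarith) (by linarith) (mul_pos hna hnu) (mul_pos hna hnv) hX2 hY2 hkey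
  have hdiv : cv / (‖a‖ * ‖v‖) < cu / (‖a‖ * ‖u‖) := by
    rw [div_lt_div_iff₀ (mul_pos hna hnv) (mul_pos hna hnu)]
    nlinarith [mul_pos hna hnu, mul_pos hna hnv]
  have hb : -1 ≤ cv / (‖a‖ * ‖v‖) := by
    have := abs_real_inner_div_norm_mul_norm_le_one a v
    rw [abs_le] at this; exact this.1
  have hb2 : cu / (‖a‖ * ‖u‖) ≤ 1 := by
    have := abs_real_inner_div_norm_mul_norm_le_one a u
    rw [abs_le] at this; exact this.2
  exact Real.strictAntiOn_arccos ⟨hb, by linarith⟩ ⟨by linarith, hb2⟩ hdiv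

theorem sum_coord (T : Finset (EuclideanSpace ℝ (Fin 2)))
    (w : EuclideanSpace ℝ (Fin 2) → ℝ) (i : Fin 2) :
    (∑ s ∈ T, w s • s) i = ∑ s ∈ T, w s * s i := by
  induction T using Finset.induction with
  | empty => simp
  | insert _ _ h ih => rw [Finset.sum_insert h, Finset.sum_insert h, ← ih]; simp

theorem cross2_eq_crossv (o a b : EuclideanSpace ℝ (Fin 2)) :
    cross2 o a b = crossv (a - o) (b - o) := by
  simp [cross2, crossv]

end JarvisAux

open JarvisAux

/-- Jarvis march step correctness: if `p, q` are consecutive clockwise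
hull vertices of `S` (no three points collinear), then a point `r ∈ S \ {q}`
maximizing the angle `∠ p q r` over all `s ∈ S \ {q}` is the next hull vertex after
`q` in clockwise order, and the maximizer is unique. -/
theorem jarvis_march_step
    (S : Finset (EuclideanSpace ℝ (Fin 2)))
    (hgen : ∀ a ∈ S, ∀ b ∈ S, ∀ c ∈ S, a ≠ b → b ≠ c → a ≠ c → cross2 a b c ≠ 0)
    (p q : EuclideanSpace ℝ (Fin 2)) (hpq : CWNext S p q)
    (r : EuclideanSpace ℝ (Fin 2)) (hr : r ∈ S) (hrq : r ≠ q)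
    (hmax : ∀ s ∈ S, s ≠ q → EuclideanGeometry.angle p q s ≤ EuclideanGeometry.angle p q r) :
    CWNext S q r ∧
      ∀ r' ∈ S, r' ≠ q →
        (∀ s ∈ S, s ≠ q → EuclideanGeometry.angle p q s ≤ EuclideanGeometry.angle p q r') →
        r' = r := by
  obtain ⟨⟨hpS, hpnc⟩, ⟨hqS, hqnc⟩, hside⟩ := hpq
  have hpq_ne : p ≠ q := by
    intro h
    have h1 := hside r hr (by rw [h]; exact hrq) hrq
    rw [h] at h1
    simp [cross2] at h1
  have hang : ∀ s, EuclideanGeometry.angle p q s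
      = InnerProductGeometry.angle (p - q) (s - q) := fun s => rfl
  have hside' : ∀ s ∈ S, s ≠ p → s ≠ q → crossv (p - q) (s - q) < 0 := by
    intro s hs hsp hsq
    have h1 := hside s hs hsp hsq
    have h2 : cross2 p q s = -(crossv (p - q) (s - q)) := by
      simp [cross2, crossv]; ring
    linarith
  have hang_ne : ∀ s ∈ S, s ≠ p → s ≠ q → EuclideanGeometry.angle p q s ≠ 0 := by
    intro s hs hsp hsq h1
    rw [hang s, InnerProductGeometry.angle_eq_zero_iff] at h1
    obtain ⟨-, t, ht, hts⟩ := h1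
    apply hgen q hqS p hpS s hs (Ne.symm hpq_ne) (Ne.symm hsp) (Ne.symm hsq)
    have e0 : (s - q) 0 = (t • (p - q)) 0 := by rw [hts]
    have e1 : (s - q) 1 = (t • (p - q)) 1 := by rw [hts]
    simp only [PiLp.sub_apply, PiLp.smul_apply, smul_eq_mul] at e0 e1
    simp only [cross2]
    rw [e0, e1]; ring
  by_cases hrp : r = p
  · -- degenerate case: S ⊆ {p, q}
    have honly : ∀ s ∈ S, s = p ∨ s = q := by
      intro s hs
      by_contra hcon
      push_neg at hcon
      obtain ⟨hsp, hsq⟩ := hcon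
      have h0 : EuclideanGeometry.angle p q r = 0 := by
        rw [hrp]; exact EuclideanGeometry.angle_self_of_ne hpq_ne
      have h1 : EuclideanGeometry.angle p q s = 0 :=
        le_antisymm (h0 ▸ hmax s hs hsq) (EuclideanGeometry.angle_nonneg p q s)
      exact hang_ne s hs hsp hsq h1
    refine ⟨⟨⟨hqS, hqnc⟩, hrp ▸ ⟨hpS, hpnc⟩, ?_⟩, ?_⟩
    · intro s hs hsq hsr
      rcases honly s hs with h | h
      · exact absurd (h.trans hrp.symm) hsr
      · exact absurd h hsq
    · intro r' hr' hr'q _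
      rcases honly r' hr' with h | h
      · rw [h, hrp]
      · exact absurd h hr'q
  · -- main case
    have hcr : crossv (p - q) (r - q) < 0 := hside' r hr hrp hrq
    have hskew : ∀ x y : EuclideanSpace ℝ (Fin 2), crossv x y = -crossv y x := by
      intro x y; simp [crossv]; ring
    have hkey : ∀ s ∈ S, s ≠ q → s ≠ r → 0 < crossv (r - q) (s - q) := by
      intro s hs hsq hsr
      rcases lt_trichotomy (crossv (r - q) (s - q)) 0 with hlt | heq | hgt
      · exfalso
        by_cases hsp : s = p
        · rw [hsp] at hlt
          rw [hskew] at hlt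
          linarith
        · have hcs : crossv (p - q) (s - q) < 0 := hside' s hs hsp hsq
          have hlt' : 0 < crossv (s - q) (r - q) := by rw [hskew]; linarith
          have h3 := angle_lt_of_crossv (p - q) (r - q) (s - q) hcr hcs hlt'
          have h2 := hmax s hs hsq
          rw [hang s, hang r] at h2
          linarith
      · exfalso
        apply hgen q hqS r hr s hs (Ne.symm hrq) (Ne.symm hsr) (Ne.symm hsq)
        rw [cross2_eq_crossv]
        exact heq
      · exact hgt
    have hrvert : IsHullVertex S r := by
      refine ⟨hr, ?_⟩
      intro hmem
      rw [← Finset.coe_erase, Finset.convexHull_eq] at hmem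
      obtain ⟨w, hw0, hw1, hwx⟩ := hmem
      rw [Finset.centerMass_eq_of_sum_1 _ _ hw1] at hwx
      simp only [id] at hwx
      set T := S.erase r with hT
      have c0 : ∑ y ∈ T, w y * y 0 = r 0 := by rw [← sum_coord, hwx]
      have c1 : ∑ y ∈ T, w y * y 1 = r 1 := by rw [← sum_coord, hwx]
      have hsum : ∑ y ∈ T, w y * crossv (r - q) (y - q) = 0 := by
        have hexp : ∑ y ∈ T, w y * crossv (r - q) (y - q)
            = (r 0 - q 0) * (∑ y ∈ T, w y * y 1) - (r 1 - q 1) * (∑ y ∈ T, w y * y 0)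
              - ((r 0 - q 0) * q 1 - (r 1 - q 1) * q 0) * (∑ y ∈ T, w y) := by
          rw [Finset.mul_sum, Finset.mul_sum, Finset.mul_sum, ← Finset.sum_sub_distrib,
            ← Finset.sum_sub_distrib]
          apply Finset.sum_congr rfl
          intro y _
          simp [crossv]; ring
        rw [hexp, c0, c1, hw1]; ring
      have hterm : ∀ y ∈ T, w y * crossv (r - q) (y - q) = 0 := by
        refine (Finset.sum_eq_zero_iff_of_nonneg ?_).1 hsum
        intro y hy
        rcases Finset.mem_erase.1 hy with ⟨hyr, hyS⟩
        by_cases hyq : y = q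
        · rw [hyq]; simp [crossv]
        · exact mul_nonneg (hw0 y hy) (le_of_lt (hkey y hyS hyq hyr))
      have hwz : ∀ y ∈ T, y ≠ q → w y = 0 := by
        intro y hy hyq
        rcases Finset.mem_erase.1 hy with ⟨hyr, hyS⟩
        rcases mul_eq_zero.1 (hterm y hy) with h | h
        · exact h
        · exact absurd h (ne_of_gt (hkey y hyS hyq hyr))
      have hqT : q ∈ T := Finset.mem_erase.2 ⟨Ne.symm hrq, hqS⟩
      have hwq : w q = 1 := by
        rw [← Finset.sum_eq_single_of_mem q hqT (fun y hy hyq => hwz y hy hyq)]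
        exact hw1
      have hreq : r = q := by
        rw [← hwx, Finset.sum_eq_single_of_mem q hqT
          (fun y hy hyq => by rw [hwz y hy hyq, zero_smul]), hwq, one_smul]
      exact hrq hreq
    refine ⟨⟨⟨hqS, hqnc⟩, hrvert, ?_⟩, ?_⟩
    · intro s hs hsq hsr
      rw [cross2_eq_crossv]
      exact hkey s hs hsq hsr
    · intro r' hr' hr'q hmax'
      by_contra hne
      have hr'p : r' ≠ p := by
        intro h
        have h0 : EuclideanGeometry.angle p q r' = 0 := by
          rw [h]; exact EuclideanGeometry.angle_self_of_ne hpq_ne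
        have h1 : EuclideanGeometry.angle p q r = 0 :=
          le_antisymm (h0 ▸ hmax' r hr hrq) (EuclideanGeometry.angle_nonneg p q r)
        exact hang_ne r hr hrp hrq h1
      have hcr' : crossv (p - q) (r' - q) < 0 := hside' r' hr' hr'p hr'q
      rcases lt_trichotomy (crossv (r - q) (r' - q)) 0 with hlt | heq | hgt
      · have hlt' : 0 < crossv (r' - q) (r - q) := by rw [hskew]; linarith
        have h3 := angle_lt_of_crossv (p - q) (r - q) (r' - q) hcr hcr' hlt'
        have h2 := hmax r' hr' hr'q
        rw [hang r', hang r] at h2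
        linarith
      · exact hgen q hqS r hr r' hr' (Ne.symm hrq) (fun h => hne h.symm) (Ne.symm hr'q)
          (by rw [cross2_eq_crossv]; exact heq)
      · have h3 := angle_lt_of_crossv (p - q) (r' - q) (r - q) hcr' hcr hgt
        have h2 := hmax' r hr hrq
        rw [hang r, hang r'] at h2
        linarith
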